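/- For any quaternions q_L and q_R with ‖q_L‖ = 1 and ‖q_R‖ = 1, the map x ↦ q_L * x * q_R is a real-linear isometry of ℍ onto itself, and its determinant as a real-linear map on the 4-dimensional real vector space ℍ equals 1 (i.e., it lies in SO(4)). -/

import Mathlib

open Quaternion

lemma mulLeft_quat_mk (q : ℍ[ℝ]) (a b c d : ℝ) :
    LinearMap.mulLeft ℝ q (⟨a, b, c, d⟩ : ℍ[ℝ,-1,0,-1]) =
      (⟨q.re * a - q.imI * b - q.imJ * c - q.imK * d,
        q.re * b + q.imI * a + q.imJ * d - q.imK * c,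
        q.re * c - q.imI * d + q.imJ * a + q.imK * b,
        q.re * d + q.imI * c - q.imJ * b + q.imK * a⟩ : ℍ[ℝ,-1,0,-1]) := by
  ext
  · erw [LinearMap.mulLeft_apply, Quaternion.re_mul]
  · erw [LinearMap.mulLeft_apply, Quaternion.imI_mul]
  · erw [LinearMap.mulLeft_apply, Quaternion.imJ_mul]
  · erw [LinearMap.mulLeft_apply, Quaternion.imK_mul]

lemma mulRight_quat_mk (q : ℍ[ℝ]) (a b c d : ℝ) :
    LinearMap.mulRight ℝ q (⟨a, b, c, d⟩ : ℍ[ℝ,-1,0,-1]) =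
      (⟨a * q.re - b * q.imI - c * q.imJ - d * q.imK,
        a * q.imI + b * q.re + c * q.imK - d * q.imJ,
        a * q.imJ - b * q.imK + c * q.re + d * q.imI,
        a * q.imK + b * q.imJ - c * q.imI + d * q.re⟩ : ℍ[ℝ,-1,0,-1]) := by
  ext
  · erw [LinearMap.mulRight_apply, Quaternion.re_mul]
  · erw [LinearMap.mulRight_apply, Quaternion.imI_mul]
  · erw [LinearMap.mulRight_apply, Quaternion.imJ_mul]
  · erw [LinearMap.mulRight_apply, Quaternion.imK_mul]

lemma det_mulLeft_quat (q : ℍ[ℝ]) :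
    LinearMap.det (LinearMap.mulLeft ℝ q) = normSq q ^ 2 := by
  set B := QuaternionAlgebra.basisOneIJK (-1 : ℝ) 0 (-1)
  have h := LinearMap.det_toMatrix B (LinearMap.mulLeft ℝ q)
  refine h.symm.trans ?_
  have hm : LinearMap.toMatrix B B (LinearMap.mulLeft ℝ q) =
      !![q.re, -q.imI, -q.imJ, -q.imK;
         q.imI, q.re, -q.imK, q.imJ;
         q.imJ, q.imK, q.re, -q.imI;
         q.imK, -q.imJ, q.imI, q.re] := by
    ext i j
    fin_cases i <;> fin_cases j <;>
      simp [LinearMap.toMatrix_apply, B, QuaternionAlgebra.basisOneIJK,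
        Module.Basis.coe_ofEquivFun, QuaternionAlgebra.equivTuple, Pi.single_apply] <;>
      erw [mulLeft_quat_mk] <;> simp <;>
      ring
  rw [hm, Matrix.det_succ_row_zero]
  simp [Fin.sum_univ_succ, Matrix.det_fin_three, normSq_def',
    show (Fin.succAbove 1 2 : Fin 4) = 3 from rfl,
    show (Fin.succAbove 2 2 : Fin 4) = 3 from rfl,
    show (Fin.castSucc 2 : Fin 4) = 2 from rfl,
    show (Fin.succAbove 3 2 : Fin 4) = 2 from rfl]
  ring

lemma det_mulRight_quat (q : ℍ[ℝ]) :
    LinearMap.det (LinearMap.mulRight ℝ q) = normSq q ^ 2 := by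
  set B := QuaternionAlgebra.basisOneIJK (-1 : ℝ) 0 (-1)
  have h := LinearMap.det_toMatrix B (LinearMap.mulRight ℝ q)
  refine h.symm.trans ?_
  have hm : LinearMap.toMatrix B B (LinearMap.mulRight ℝ q) =
      !![q.re, -q.imI, -q.imJ, -q.imK;
         q.imI, q.re, q.imK, -q.imJ;
         q.imJ, -q.imK, q.re, q.imI;
         q.imK, q.imJ, -q.imI, q.re] := by
    ext i j
    fin_cases i <;> fin_cases j <;>
      simp [LinearMap.toMatrix_apply, B, QuaternionAlgebra.basisOneIJK,
        Module.Basis.coe_ofEquivFun, QuaternionAlgebra.equivTuple, Pi.single_apply] <;>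
      erw [mulRight_quat_mk] <;> simp <;>
      ring
  rw [hm, Matrix.det_succ_row_zero]
  simp [Fin.sum_univ_succ, Matrix.det_fin_three, normSq_def',
    show (Fin.succAbove 1 2 : Fin 4) = 3 from rfl,
    show (Fin.succAbove 2 2 : Fin 4) = 3 from rfl,
    show (Fin.castSucc 2 : Fin 4) = 2 from rfl,
    show (Fin.succAbove 3 2 : Fin 4) = 2 from rfl]
  ring

/-- Two-sided multiplication by unit quaternions is a rotation: it is a
real-linear isometry of `ℍ ≅ ℝ⁴` and has determinant 1, i.e. it lies in SO(4). -/
theorem two_sided_quaternion_mul_mem_so4 (qL qR : ℍ[ℝ])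
    (hL : ‖qL‖ = 1) (hR : ‖qR‖ = 1) :
    (∀ x : ℍ[ℝ], ‖qL * x * qR‖ = ‖x‖) ∧
    LinearMap.det
      ((LinearMap.mulRight ℝ qR).comp (LinearMap.mulLeft ℝ qL)) = 1 := by
  have hnL : normSq qL = 1 := by
    rw [normSq_eq_norm_mul_self, hL]; norm_num
  have hnR : normSq qR = 1 := by
    rw [normSq_eq_norm_mul_self, hR]; norm_num
  constructor
  · intro x
    rw [norm_mul, norm_mul, hL, hR]
    ring
  · rw [LinearMap.det_comp, det_mulLeft_quat, det_mulRight_quat, hnL, hnR]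
    norm_num
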